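/- For every positive natural number m and every complex number w, ∑_{k=0}^{m} C(m,k) · B_{m+k+1}((1−w)/2)/(m+k+1) · w^{m−k} = ((−1)^{m+1}/2) · w^{2m+1}/((2m+1)·C(2m,m)). -/

import Mathlib

open Finset

/-- The `n`-th Bernoulli polynomial evaluated at a complex number `x`. -/
noncomputable def bernoulliPolyC (n : ℕ) (x : ℂ) : ℂ :=
  ((Polynomial.bernoulli n).map (algebraMap ℚ ℂ)).eval x

open PowerSeries in
lemma bernoulli_half_odd {n : ℕ} (hn : Odd n) :
    (Polynomial.bernoulli n).eval (1/2 : ℚ) = 0 := by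
  set G : ℚ⟦X⟧ := PowerSeries.mk fun n => Polynomial.aeval (1/2 : ℚ) ((1 / (n.factorial : ℚ)) • Polynomial.bernoulli n) with hG
  have key : G * (exp ℚ - 1) = PowerSeries.X * rescale (1/2 : ℚ) (exp ℚ) :=
    Polynomial.bernoulli_generating_function (1/2 : ℚ)
  -- apply rescale (-1)
  have key2 : rescale (-1 : ℚ) G * (rescale (-1 : ℚ) (exp ℚ) - 1)
      = (- PowerSeries.X) * rescale (-(1/2) : ℚ) (exp ℚ) := by
    have := congrArg (rescale (-1 : ℚ)) key
    simpa [map_mul, map_sub, rescale_neg_one_X, rescale_rescale,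
      show (1/2 : ℚ) * (-1) = -(1/2) by norm_num] using this
  have hmul : rescale (-1 : ℚ) (exp ℚ) * exp ℚ = 1 := by
    have := exp_mul_exp_eq_exp_add (-1 : ℚ) 1
    simpa [rescale_one] using this
  have hmul2 : rescale (-(1/2) : ℚ) (exp ℚ) * exp ℚ = rescale (1/2 : ℚ) (exp ℚ) := by
    have h := exp_mul_exp_eq_exp_add (-(1/2) : ℚ) 1
    rw [show rescale (1 : ℚ) (exp ℚ) = exp ℚ from by rw [rescale_one]; rfl] at h
    rw [h]; norm_num
  have key3 : rescale (-1 : ℚ) G * (1 - exp ℚ) = -(PowerSeries.X * rescale (1/2 : ℚ) (exp ℚ)) := by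
    calc rescale (-1 : ℚ) G * (1 - exp ℚ)
        = rescale (-1 : ℚ) G * (rescale (-1 : ℚ) (exp ℚ) - 1) * exp ℚ := by
          rw [mul_assoc, sub_mul, one_mul, mul_sub, hmul, mul_one, mul_sub, mul_one]
      _ = -PowerSeries.X * rescale (-(1/2) : ℚ) (exp ℚ) * exp ℚ := by rw [key2]
      _ = -(PowerSeries.X * rescale (1/2 : ℚ) (exp ℚ)) := by
          rw [neg_mul, neg_mul, mul_assoc, hmul2]
  have heq : rescale (-1 : ℚ) G = G := by
    have hne : (1 - exp ℚ) ≠ 0 := by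
      intro h
      have := congrArg (PowerSeries.coeff (R := ℚ) 1) h
      simp [coeff_exp] at this
    have hGG : rescale (-1 : ℚ) G * (1 - exp ℚ) = G * (1 - exp ℚ) := by
      rw [key3]
      have : G * (1 - exp ℚ) = -(G * (exp ℚ - 1)) := by ring
      rw [this, key]
    exact mul_right_cancel₀ hne hGG
  have hco := congrArg (PowerSeries.coeff (R := ℚ) n) heq
  rw [coeff_rescale] at hco
  obtain ⟨j, rfl⟩ := hn
  have hodd : ((-1 : ℚ)) ^ (2 * j + 1) = -1 := by
    rw [pow_succ, pow_mul]; norm_num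
  rw [hodd] at hco
  simp only [hG, coeff_mk, map_smul, smul_eq_mul, Polynomial.coe_aeval_eq_eval] at hco
  have hfac : ((1 : ℚ) / ((2 * j + 1).factorial : ℚ)) ≠ 0 := by
    have : ((2 * j + 1).factorial : ℚ) ≠ 0 := by positivity
    simp [this]
  have hx : ((1:ℚ) / ((2 * j + 1).factorial : ℚ)) * Polynomial.eval (1/2 : ℚ) (Polynomial.bernoulli (2*j+1)) = 0 := by
    linarith [hco]
  rcases mul_eq_zero.mp hx with h | h
  · exact absurd h hfac
  · exact h

lemma bernoulliPolyC_expand (n : ℕ) (x : ℂ) :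
    bernoulliPolyC n x
      = ∑ i ∈ Finset.range (n + 1),
          (algebraMap ℚ ℂ (_root_.bernoulli i)) * (n.choose i : ℂ) * x ^ (n - i) := by
  rw [bernoulliPolyC, Polynomial.bernoulli, Polynomial.map_sum, Polynomial.eval_finset_sum]
  refine Finset.sum_congr rfl fun i _ => ?_
  rw [Polynomial.map_monomial, Polynomial.eval_monomial, map_mul, map_natCast]

lemma bernoulliPolyC_algebraMap (n : ℕ) (x : ℚ) :
    bernoulliPolyC n (algebraMap ℚ ℂ x) = algebraMap ℚ ℂ ((Polynomial.bernoulli n).eval x) := by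
  rw [bernoulliPolyC, Polynomial.eval_map, Polynomial.eval₂_at_apply]

-- universal trinomial revision
lemma choose_swap (n i j : ℕ) :
    n.choose i * (n - i).choose j = n.choose j * (n - j).choose i := by
  by_cases h : i + j ≤ n
  · have h1 : i ≤ n := le_trans (Nat.le_add_right _ _) h
    have h2 : j ≤ n := le_trans (Nat.le_add_left _ _) h
    have e1 := Nat.choose_mul (n := n) (k := i + j) (show i ≤ i + j from Nat.le_add_right _ _)
    have e2 := Nat.choose_mul (n := n) (k := i + j) (show j ≤ i + j from Nat.le_add_left _ _)
    rw [Nat.add_sub_cancel_left] at e1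
    rw [Nat.add_sub_cancel] at e2
    have hsym : (i + j).choose i = (i + j).choose j := by
      rw [← Nat.choose_symm (Nat.le_add_left j i), Nat.add_sub_cancel]
    rw [← e1, ← e2, hsym]
  · have z1 : n.choose i * (n - i).choose j = 0 := by
      by_cases hi : i ≤ n
      · have : n - i < j := by omega
        rw [Nat.choose_eq_zero_of_lt this, mul_zero]
      · rw [Nat.choose_eq_zero_of_lt (by omega), zero_mul]
    have z2 : n.choose j * (n - j).choose i = 0 := by
      by_cases hj : j ≤ n
      · have : n - j < i := by omega
        rw [Nat.choose_eq_zero_of_lt this, mul_zero]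
      · rw [Nat.choose_eq_zero_of_lt (by omega), zero_mul]
    rw [z1, z2]

lemma bernoulliPolyC_half_add (n : ℕ) (y : ℂ) :
    bernoulliPolyC n (2⁻¹ + y)
      = ∑ i ∈ Finset.range (n + 1),
          (n.choose i : ℂ) * bernoulliPolyC i (2⁻¹) * y ^ (n - i) := by
  rw [bernoulliPolyC_expand]
  have step1 : ∀ i ∈ Finset.range (n+1),
      (algebraMap ℚ ℂ (_root_.bernoulli i)) * (n.choose i : ℂ) * (2⁻¹ + y) ^ (n - i)
      = ∑ j ∈ Finset.range (n+1),
          (algebraMap ℚ ℂ (_root_.bernoulli i)) * (n.choose i : ℂ) * ((n - i).choose j : ℂ)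
            * (2⁻¹ : ℂ) ^ (n - i - j) * y ^ j := by
    intro i hi
    rw [add_comm, add_pow]
    rw [Finset.mul_sum]
    rw [← Finset.sum_subset (Finset.range_subset_range.mpr (by
        simp only [Finset.mem_range] at hi; omega : n - i + 1 ≤ n + 1))]
    · refine Finset.sum_congr rfl fun j hj => ?_
      ring
    · intro j _ hj
      simp only [Finset.mem_range, not_lt] at hj
      rw [Nat.choose_eq_zero_of_lt (show n - i < j by omega)]
      simp
  rw [Finset.sum_congr rfl step1, Finset.sum_comm]
  -- now goal: ∑ j ∑ i  b i * C(n,i) * C(n-i,j) * 2⁻¹^(n-i-j) * y^j = ∑ i C(n,i) * Bh i * y^(n-i)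
  have step2 : ∀ j ∈ Finset.range (n+1),
      (∑ i ∈ Finset.range (n+1),
        (algebraMap ℚ ℂ (_root_.bernoulli i)) * (n.choose i : ℂ) * ((n - i).choose j : ℂ)
          * (2⁻¹ : ℂ) ^ (n - i - j) * y ^ j)
      = (n.choose j : ℂ) * bernoulliPolyC (n - j) (2⁻¹) * y ^ j := by
    intro j hj
    simp only [Finset.mem_range] at hj
    have t1 : ∀ i ∈ Finset.range (n+1),
        (algebraMap ℚ ℂ (_root_.bernoulli i)) * (n.choose i : ℂ) * ((n - i).choose j : ℂ)
          * (2⁻¹ : ℂ) ^ (n - i - j) * y ^ j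
        = (n.choose j : ℂ) * ((algebraMap ℚ ℂ (_root_.bernoulli i)) * ((n - j).choose i : ℂ)
            * (2⁻¹ : ℂ) ^ (n - j - i)) * y ^ j := by
      intro i _
      have hc : (n.choose i : ℂ) * ((n - i).choose j : ℂ)
          = (n.choose j : ℂ) * ((n - j).choose i : ℂ) := by
        exact_mod_cast congrArg (Nat.cast : ℕ → ℂ) (choose_swap n i j)
      have he : n - i - j = n - j - i := by omega
      rw [he]
      calc algebraMap ℚ ℂ (_root_.bernoulli i) * (n.choose i : ℂ) * ((n - i).choose j : ℂ)
            * (2⁻¹ : ℂ) ^ (n - j - i) * y ^ j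
          = (n.choose i : ℂ) * ((n - i).choose j : ℂ) * ((algebraMap ℚ ℂ (_root_.bernoulli i))
            * (2⁻¹ : ℂ) ^ (n - j - i) * y ^ j) := by ring
        _ = (n.choose j : ℂ) * ((n - j).choose i : ℂ) * ((algebraMap ℚ ℂ (_root_.bernoulli i))
            * (2⁻¹ : ℂ) ^ (n - j - i) * y ^ j) := by rw [hc]
        _ = _ := by ring
    rw [Finset.sum_congr rfl t1]
    have t2 : (∑ i ∈ Finset.range (n - j + 1),
        (n.choose j : ℂ) * ((algebraMap ℚ ℂ (_root_.bernoulli i)) * ((n - j).choose i : ℂ)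
          * (2⁻¹ : ℂ) ^ (n - j - i)) * y ^ j)
        = ∑ i ∈ Finset.range (n+1),
        (n.choose j : ℂ) * ((algebraMap ℚ ℂ (_root_.bernoulli i)) * ((n - j).choose i : ℂ)
          * (2⁻¹ : ℂ) ^ (n - j - i)) * y ^ j := by
      refine Finset.sum_subset (Finset.range_subset_range.mpr (by omega)) ?_
      intro i _ hi
      simp only [Finset.mem_range, not_lt] at hi
      rw [Nat.choose_eq_zero_of_lt (show n - j < i by omega)]
      simp
    rw [← t2, bernoulliPolyC_expand, Finset.mul_sum, Finset.sum_mul]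
  rw [Finset.sum_congr rfl step2]
  -- reflect
  rw [show n + 1 = n + 1 from rfl]
  have := Finset.sum_range_reflect
    (fun i => (n.choose i : ℂ) * bernoulliPolyC (n - i) (2⁻¹) * y ^ i) (n + 1)
  rw [← this]
  refine Finset.sum_congr rfl fun i hi => ?_
  simp only [Finset.mem_range] at hi
  have h1 : n + 1 - 1 - i = n - i := by omega
  rw [h1, Nat.choose_symm (by omega), show n - (n - i) = i by omega]

-- Lemma B
lemma sum_choose_choose_half (m s : ℕ) :
    ∑ k ∈ Finset.range (m + 1), (m.choose k : ℂ) * (k.choose s : ℂ) * (-(2⁻¹ : ℂ)) ^ k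
      = (m.choose s : ℂ) * (-1 : ℂ) ^ s * (2⁻¹ : ℂ) ^ m := by
  by_cases hs : s ≤ m
  · have hsub : Finset.Ico s (m+1) ⊆ Finset.range (m+1) := by
      intro k hk; simp only [Finset.mem_Ico] at hk; simp only [Finset.mem_range]; omega
    have t1 : ∀ k ∈ Finset.range (m+1), k ∉ Finset.Ico s (m+1) →
        (m.choose k : ℂ) * (k.choose s : ℂ) * (-(2⁻¹ : ℂ)) ^ k = 0 := by
      intro k hk hks
      simp only [Finset.mem_range] at hk
      simp only [Finset.mem_Ico, not_and, not_lt] at hks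
      have : k < s := by omega
      rw [Nat.choose_eq_zero_of_lt this]
      simp
    rw [← Finset.sum_subset hsub t1]
    rw [Finset.sum_Ico_eq_sum_range]
    have t2 : ∀ k ∈ Finset.range (m + 1 - s),
        (m.choose (s + k) : ℂ) * ((s + k).choose s : ℂ) * (-(2⁻¹ : ℂ)) ^ (s + k)
        = ((m.choose s : ℂ) * (-(2⁻¹ : ℂ)) ^ s) * (((m - s).choose k : ℂ) * (-(2⁻¹ : ℂ)) ^ k) := by
      intro k hk
      simp only [Finset.mem_range] at hk
      have hc : m.choose (s + k) * (s + k).choose s = m.choose s * (m - s).choose k := by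
        have := Nat.choose_mul (n := m) (k := s + k) (show s ≤ s + k from Nat.le_add_right _ _)
        rw [Nat.add_sub_cancel_left] at this
        exact this
      have hcc : (m.choose (s + k) : ℂ) * ((s + k).choose s : ℂ)
          = (m.choose s : ℂ) * ((m - s).choose k : ℂ) := by
        exact_mod_cast congrArg (Nat.cast : ℕ → ℂ) hc
      rw [pow_add]
      calc (m.choose (s + k) : ℂ) * ((s + k).choose s : ℂ) * ((-(2⁻¹ : ℂ)) ^ s * (-(2⁻¹ : ℂ)) ^ k)
          = (m.choose (s + k) : ℂ) * ((s + k).choose s : ℂ) * (-(2⁻¹ : ℂ)) ^ s * (-(2⁻¹ : ℂ)) ^ k := by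
            ring
        _ = (m.choose s : ℂ) * ((m - s).choose k : ℂ) * (-(2⁻¹ : ℂ)) ^ s * (-(2⁻¹ : ℂ)) ^ k := by
            rw [hcc]
        _ = _ := by ring
    rw [Finset.sum_congr rfl t2, ← Finset.mul_sum]
    have hbin : ∑ k ∈ Finset.range (m + 1 - s), ((m - s).choose k : ℂ) * (-(2⁻¹ : ℂ)) ^ k
        = (2⁻¹ : ℂ) ^ (m - s) := by
      have hap := add_pow (-(2⁻¹ : ℂ)) 1 (m - s)
      simp only [one_pow, mul_one] at hap
      rw [show m + 1 - s = m - s + 1 by omega]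
      rw [show ((2⁻¹ : ℂ)) ^ (m-s) = (-(2⁻¹ : ℂ) + 1) ^ (m - s) by norm_num]
      rw [hap]
      refine Finset.sum_congr rfl fun k _ => by ring
    rw [hbin]
    rw [show (-(2⁻¹ : ℂ)) ^ s = (-1 : ℂ) ^ s * (2⁻¹ : ℂ) ^ s from by rw [← neg_one_mul, mul_pow]]
    rw [show ((m.choose s : ℂ) * ((-1 : ℂ) ^ s * (2⁻¹ : ℂ) ^ s)) * (2⁻¹ : ℂ) ^ (m - s)
      = (m.choose s : ℂ) * (-1 : ℂ) ^ s * ((2⁻¹ : ℂ) ^ s * (2⁻¹ : ℂ) ^ (m - s)) from by ring]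
    rw [← pow_add, show s + (m - s) = m by omega]
  · have t0 : ∀ k ∈ Finset.range (m+1),
        (m.choose k : ℂ) * (k.choose s : ℂ) * (-(2⁻¹ : ℂ)) ^ k = 0 := by
      intro k hk
      simp only [Finset.mem_range] at hk
      rw [Nat.choose_eq_zero_of_lt (show k < s by omega)]
      simp
    rw [Finset.sum_congr rfl t0, Finset.sum_const_zero,
      Nat.choose_eq_zero_of_lt (show m < s by omega)]
    simp

-- V-lemma
lemma sum_choose_add_choose_odd (m j : ℕ) (hj : Odd j) :
    ∑ k ∈ Finset.range (m + 1), (m.choose k : ℂ) * ((m + k).choose j : ℂ) * (-(2⁻¹ : ℂ)) ^ k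
      = 0 := by
  have vand : ∀ k, ((m + k).choose j : ℂ)
      = ∑ r ∈ Finset.range (j + 1), (m.choose r : ℂ) * (k.choose (j - r) : ℂ) := by
    intro k
    have h := Nat.add_choose_eq m k j
    rw [Finset.Nat.sum_antidiagonal_eq_sum_range_succ
      (f := fun a b => m.choose a * k.choose b)] at h
    exact_mod_cast congrArg (Nat.cast : ℕ → ℂ) h
  have step1 : ∀ k ∈ Finset.range (m+1),
      (m.choose k : ℂ) * ((m + k).choose j : ℂ) * (-(2⁻¹ : ℂ)) ^ k
      = ∑ r ∈ Finset.range (j + 1),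
          (m.choose r : ℂ) * ((m.choose k : ℂ) * (k.choose (j - r) : ℂ) * (-(2⁻¹ : ℂ)) ^ k) := by
    intro k _
    rw [vand k, Finset.mul_sum, Finset.sum_mul]
    exact Finset.sum_congr rfl fun r _ => by ring
  rw [Finset.sum_congr rfl step1, Finset.sum_comm]
  have step2 : ∀ r ∈ Finset.range (j+1),
      (∑ k ∈ Finset.range (m+1),
        (m.choose r : ℂ) * ((m.choose k : ℂ) * (k.choose (j - r) : ℂ) * (-(2⁻¹ : ℂ)) ^ k))
      = (m.choose r : ℂ) * ((m.choose (j - r) : ℂ) * (-1 : ℂ) ^ (j - r) * (2⁻¹ : ℂ) ^ m) := by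
    intro r _
    rw [← Finset.mul_sum, sum_choose_choose_half m (j - r)]
  rw [Finset.sum_congr rfl step2]
  -- antisymmetry
  set f : ℕ → ℂ := fun r =>
    (m.choose r : ℂ) * ((m.choose (j - r) : ℂ) * (-1 : ℂ) ^ (j - r) * (2⁻¹ : ℂ) ^ m) with hf
  have hrefl : ∑ r ∈ Finset.range (j+1), f r = ∑ r ∈ Finset.range (j+1), f (j - r) := by
    rw [← Finset.sum_range_reflect]
    refine Finset.sum_congr rfl fun r hr => ?_
    have he : j + 1 - 1 - r = j - r := by omega
    rw [he]
  have hneg : ∀ r ∈ Finset.range (j+1), f (j - r) = - f r := by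
    intro r hr
    simp only [Finset.mem_range] at hr
    have h1 : j - (j - r) = r := by omega
    have h2 : (-1 : ℂ) ^ (j - r) = - (-1 : ℂ) ^ r := by
      have : (-1 : ℂ) ^ (j - r) * (-1 : ℂ) ^ r = (-1 : ℂ) ^ j := by
        rw [← pow_add]; congr 1; omega
      have hj' : (-1 : ℂ) ^ j = -1 := Odd.neg_one_pow hj
      have hr2 : ((-1 : ℂ) ^ r) * ((-1 : ℂ) ^ r) = 1 := by
        rw [← pow_add, ← two_mul, pow_mul]; norm_num
      calc (-1 : ℂ) ^ (j - r) = (-1 : ℂ) ^ (j - r) * (((-1 : ℂ) ^ r) * ((-1 : ℂ) ^ r)) := by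
            rw [hr2, mul_one]
        _ = ((-1 : ℂ) ^ (j - r) * (-1 : ℂ) ^ r) * (-1 : ℂ) ^ r := by ring
        _ = (-1 : ℂ) ^ j * (-1 : ℂ) ^ r := by rw [this]
        _ = - (-1 : ℂ) ^ r := by rw [hj']; ring
    simp only [hf, h1, h2]
    ring
  have : ∑ r ∈ Finset.range (j+1), f r = - ∑ r ∈ Finset.range (j+1), f r := by
    calc ∑ r ∈ Finset.range (j+1), f r = ∑ r ∈ Finset.range (j+1), f (j - r) := hrefl
      _ = ∑ r ∈ Finset.range (j+1), - f r := Finset.sum_congr rfl hneg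
      _ = - ∑ r ∈ Finset.range (j+1), f r := by rw [Finset.sum_neg_distrib]
  have h0 : ∑ r ∈ Finset.range (j+1), f r + ∑ r ∈ Finset.range (j+1), f r = 0 := by
    nth_rewrite 1 [this]
    ring
  exact add_self_eq_zero.mp h0

-- Lemma W : closed form by induction
lemma lemW : ∀ m j : ℕ, ∑ r ∈ Finset.range (m + 1), (m.choose r : ℝ) * ((-1 : ℝ) ^ r / (2 * r + 2 * j + 1))
    = (m.factorial * (2 * j).factorial * (m + j).factorial * 4 ^ m : ℝ)
      / (j.factorial * (2 * (m + j) + 1).factorial) := by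
  intro m
  induction m with
  | zero =>
    intro j
    rw [Nat.zero_add]
    simp only [Nat.factorial, Finset.range_one, Finset.sum_singleton, Nat.choose_self]
    push_cast
    rw [show (0:ℕ) + j = j from by omega]
    field_simp
  | succ m ih =>
    intro j
    have split := Finset.sum_choose_succ_mul
      (fun i _ => ((-1 : ℝ) ^ i / (2 * i + 2 * j + 1))) m
    rw [split]
    have e1 : ∀ i ∈ Finset.range (m+1),
        (m.choose i : ℝ) * ((-1 : ℝ) ^ (i+1) / (2 * ((i:ℕ)+1 : ℕ) + 2 * j + 1))
        = - ((m.choose i : ℝ) * ((-1 : ℝ) ^ i / (2 * i + 2 * ((j+1 : ℕ) : ℝ) + 1))) := by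
      intro i _
      have h1 : ((((i:ℕ)+1 : ℕ) : ℝ)) = (i : ℝ) + 1 := by push_cast; ring
      have h2 : (((j+1 : ℕ)) : ℝ) = (j : ℝ) + 1 := by push_cast; ring
      rw [h1, h2, pow_succ]
      have h3 : (2*((i:ℝ)+1) + 2*j + 1) = (2*i + 2*((j:ℝ)+1) + 1) := by ring
      rw [h3]
      ring
    rw [Finset.sum_congr rfl e1, Finset.sum_neg_distrib]
    have hj1 : ∑ i ∈ Finset.range (m+1),
        (m.choose i : ℝ) * ((-1 : ℝ) ^ i / (2 * i + 2 * ((j+1 : ℕ) : ℝ) + 1))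
        = ∑ r ∈ Finset.range (m + 1), (m.choose r : ℝ) * ((-1 : ℝ) ^ r / (2 * r + 2 * ((j+1:ℕ)) + 1)) := rfl
    rw [hj1, ih (j+1), ih j]
    -- algebra with factorials
    have f1 : ((2 * (j+1)).factorial : ℝ) = (2*j+2) * (2*j+1) * (2*j).factorial := by
      rw [show 2 * (j+1) = (2*j+1) + 1 by ring, Nat.factorial_succ, Nat.factorial_succ]
      push_cast
      ring
    have f2 : ((m + (j+1)).factorial : ℝ) = (m+j+1) * (m+j).factorial := by
      rw [show m + (j+1) = (m+j) + 1 by ring, Nat.factorial_succ]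
      push_cast
      ring
    have f3 : ((2 * (m + (j+1)) + 1).factorial : ℝ)
        = (2*(m:ℝ)+2*j+3) * (2*(m:ℝ)+2*j+2) * ((2 * (m+j) + 1).factorial : ℝ) := by
      rw [show 2 * (m + (j+1)) + 1 = ((2*(m+j)+1) + 1) + 1 by ring, Nat.factorial_succ,
        Nat.factorial_succ]
      push_cast
      ring
    have f4 : ((j+1).factorial : ℝ) = ((j:ℝ)+1) * j.factorial := by
      rw [Nat.factorial_succ]; push_cast; ring
    have f5 : ((m+1).factorial : ℝ) = ((m:ℝ)+1) * m.factorial := by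
      rw [Nat.factorial_succ]; push_cast; ring
    have f6 : (((m+1) + j).factorial : ℝ) = ((m:ℝ)+j+1) * (m+j).factorial := by
      rw [show (m+1) + j = (m+j) + 1 by ring, Nat.factorial_succ]; push_cast; ring
    have f7 : ((2 * ((m+1) + j) + 1).factorial : ℝ)
        = (2*(m:ℝ)+2*j+3) * (2*(m:ℝ)+2*j+2) * ((2 * (m+j) + 1).factorial : ℝ) := by
      rw [show 2 * ((m+1) + j) + 1 = ((2*(m+j)+1) + 1) + 1 by ring, Nat.factorial_succ,
        Nat.factorial_succ]
      push_cast
      ring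
    rw [f1, f2, f3, f4, f5, f6, f7]
    have hjf : (j.factorial : ℝ) ≠ 0 := by positivity
    have hmf : (m.factorial : ℝ) ≠ 0 := by positivity
    have h2jf : ((2*j).factorial : ℝ) ≠ 0 := by positivity
    have hmjf : ((m+j).factorial : ℝ) ≠ 0 := by positivity
    have h2mjf : (((2*(m+j)+1)).factorial : ℝ) ≠ 0 := by positivity
    have p1 : ((j:ℝ)+1) ≠ 0 := by positivity
    have p2 : (2*(m:ℝ)+2*j+3) ≠ 0 := by positivity
    have p3 : (2*(m:ℝ)+2*j+2) ≠ 0 := by positivity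
    field_simp
    ring

open intervalIntegral MeasureTheory in
lemma U0_real (m : ℕ) :
    ∑ k ∈ Finset.range (m + 1), (m.choose k : ℝ) * (-(2⁻¹ : ℝ)) ^ k / (m + k + 1)
      = 2 ^ m * (m.factorial : ℝ) * m.factorial / (2 * m + 1).factorial := by
  have key : (∫ x in (0:ℝ)..1, x ^ m * (1 - x/2) ^ m)
      = ∑ k ∈ Finset.range (m + 1), (m.choose k : ℝ) * (-(2⁻¹ : ℝ)) ^ k / (m + k + 1) := by
    have expand : ∀ x : ℝ, x ^ m * (1 - x/2) ^ m
        = ∑ k ∈ Finset.range (m + 1), (m.choose k : ℝ) * (-(2⁻¹ : ℝ)) ^ k * x ^ (m + k) := by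
      intro x
      have hb := add_pow (-(x/2) : ℝ) 1 m
      simp only [one_pow, mul_one] at hb
      have h1 : (1 - x/2 : ℝ) = -(x/2) + 1 := by ring
      rw [h1, hb, Finset.mul_sum]
      refine Finset.sum_congr rfl fun k hk => ?_
      have : (-(x/2) : ℝ) ^ k = (-(2⁻¹:ℝ)) ^ k * x ^ k := by
        rw [show (-(x/2) : ℝ) = (-(2⁻¹:ℝ)) * x by ring, mul_pow]
      rw [this, pow_add]
      ring
    rw [intervalIntegral.integral_congr (g := fun x => ∑ k ∈ Finset.range (m + 1),
      (m.choose k : ℝ) * (-(2⁻¹ : ℝ)) ^ k * x ^ (m + k)) (fun x _ => expand x)]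
    rw [intervalIntegral.integral_finset_sum (fun k _ => by
      exact (Continuous.intervalIntegrable (by continuity) 0 1))]
    refine Finset.sum_congr rfl fun k _ => ?_
    rw [intervalIntegral.integral_const_mul, integral_pow]
    push_cast
    rw [one_pow, zero_pow (by omega)]
    ring
  have key2 : (∫ x in (0:ℝ)..1, x ^ m * (1 - x/2) ^ m)
      = (2⁻¹:ℝ) ^ m * ∑ r ∈ Finset.range (m + 1), (m.choose r : ℝ) * ((-1 : ℝ) ^ r / (2 * r + 2 * 0 + 1)) := by
    have expand2 : ∀ x : ℝ, x ^ m * (1 - x/2) ^ m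
        = ∑ r ∈ Finset.range (m + 1), (2⁻¹:ℝ) ^ m * ((m.choose r : ℝ) * (-1 : ℝ) ^ r * (1 - x) ^ (2*r)) := by
      intro x
      have h1 : x * (1 - x/2) = (1 - (1-x)^2) / 2 := by ring
      have h2 : x ^ m * (1 - x/2) ^ m = ((1 - (1-x)^2) / 2) ^ m := by
        rw [← mul_pow, h1]
      rw [h2]
      have hb := add_pow (-((1-x)^2) : ℝ) 1 m
      simp only [one_pow, mul_one] at hb
      have h3 : ((1 - (1-x)^2) / 2 : ℝ) ^ m = (2⁻¹:ℝ) ^ m * (-((1-x)^2) + 1) ^ m := by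
        rw [← mul_pow]; congr 1; ring
      rw [h3, hb, Finset.mul_sum]
      refine Finset.sum_congr rfl fun r hr => ?_
      have : (-((1-x)^2) : ℝ) ^ r = (-1:ℝ) ^ r * (1-x) ^ (2*r) := by
        rw [show (-((1-x)^2) : ℝ) = (-1:ℝ) * (1-x)^2 by ring, mul_pow, ← pow_mul]
      rw [this]
      ring
    rw [intervalIntegral.integral_congr (g := fun x => ∑ r ∈ Finset.range (m + 1),
      (2⁻¹:ℝ) ^ m * ((m.choose r : ℝ) * (-1 : ℝ) ^ r * (1 - x) ^ (2*r))) (fun x _ => expand2 x)]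
    rw [intervalIntegral.integral_finset_sum (fun r _ => by
      exact (Continuous.intervalIntegrable (by continuity) 0 1))]
    rw [Finset.mul_sum]
    refine Finset.sum_congr rfl fun r _ => ?_
    rw [intervalIntegral.integral_const_mul, intervalIntegral.integral_const_mul]
    have hsub : (∫ x in (0:ℝ)..1, (1 - x) ^ (2*r)) = ∫ x in (0:ℝ)..1, x ^ (2*r) := by
      have := intervalIntegral.integral_comp_sub_left (a := (0:ℝ)) (b := 1)
        (fun x => x ^ (2*r)) 1
      simp only [sub_zero, sub_self] at this
      rw [this]
    rw [hsub, integral_pow]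
    rw [one_pow, zero_pow (by omega)]
    push_cast
    ring
  have := key.symm.trans key2
  rw [this]
  have W0 := lemW m 0
  simp only [Nat.cast_zero, Nat.mul_zero, Nat.add_zero, Nat.factorial_zero, Nat.cast_one] at W0
  rw [W0]
  have hne : ((2*m+1).factorial : ℝ) ≠ 0 := by positivity
  field_simp
  rw [show (4:ℝ) = 2^2 by norm_num, ← pow_mul]
  rw [pow_mul, ← mul_pow]; norm_num

lemma U0_complex (m : ℕ) :
    ∑ k ∈ Finset.range (m + 1), (m.choose k : ℂ) * (-(2⁻¹ : ℂ)) ^ k / ((m:ℂ) + k + 1)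
      = 2 ^ m * (m.factorial : ℂ) * m.factorial / ((2 * m + 1).factorial : ℂ) := by
  have h := congrArg (Complex.ofReal) (U0_real m)
  push_cast at h
  convert h using 2

theorem stmt_4 (m : ℕ) (hm : 0 < m) (w : ℂ) :
    ∑ k ∈ Finset.range (m + 1),
        (m.choose k : ℂ) * (bernoulliPolyC (m + k + 1) ((1 - w) / 2) / (m + k + 1))
          * w ^ (m - k)
      = (-1) ^ (m + 1) / 2 * (w ^ (2 * m + 1) / ((2 * m + 1) * ((2 * m).choose m))) := by
  have hBh0 : bernoulliPolyC 0 (2⁻¹ : ℂ) = 1 := by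
    simp [bernoulliPolyC]
  have hBhodd : ∀ i : ℕ, Odd i → bernoulliPolyC i (2⁻¹ : ℂ) = 0 := by
    intro i hi
    have h2 : ((2⁻¹ : ℂ)) = algebraMap ℚ ℂ (1/2 : ℚ) := by norm_num
    rw [h2, bernoulliPolyC_algebraMap, bernoulli_half_odd hi, map_zero]
  set T : ℕ → ℕ → ℂ := fun k i =>
    (m.choose k : ℂ) * (((m+k+1).choose i : ℂ) * bernoulliPolyC i (2⁻¹)
      * (-(w/2)) ^ (m+k+1-i)) / ((m:ℂ) + k + 1) * w ^ (m - k) with hT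
  have stepA : ∀ k ∈ Finset.range (m+1),
      (m.choose k : ℂ) * (bernoulliPolyC (m + k + 1) ((1 - w) / 2) / ((m:ℂ) + k + 1)) * w ^ (m - k)
      = ∑ i ∈ Finset.range (2*m+2), T k i := by
    intro k hk
    simp only [Finset.mem_range] at hk
    have hx : ((1 - w)/2 : ℂ) = 2⁻¹ + (-(w/2)) := by ring
    rw [hx, bernoulliPolyC_half_add]
    have hext : ∑ i ∈ Finset.range (m+k+1+1),
          ((m+k+1).choose i : ℂ) * bernoulliPolyC i (2⁻¹) * (-(w/2)) ^ (m+k+1-i)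
        = ∑ i ∈ Finset.range (2*m+2),
          ((m+k+1).choose i : ℂ) * bernoulliPolyC i (2⁻¹) * (-(w/2)) ^ (m+k+1-i) := by
      refine Finset.sum_subset (Finset.range_subset_range.mpr (by omega)) ?_
      intro i _ hi
      simp only [Finset.mem_range, not_lt] at hi
      rw [Nat.choose_eq_zero_of_lt (show m+k+1 < i by omega)]
      simp
    rw [hext, Finset.sum_div, Finset.mul_sum, Finset.sum_mul]
    refine Finset.sum_congr rfl fun i _ => ?_
    simp only [hT]
    ring
  rw [Finset.sum_congr rfl stepA, Finset.sum_comm]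
  have hzero : ∀ i ∈ Finset.range (2*m+2), i ≠ 0 →
      (∑ k ∈ Finset.range (m+1), T k i) = 0 := by
    intro i _ hi0
    rcases Nat.even_or_odd i with hev | hodd
    · have hi1 : Odd (i - 1) := by
        rcases hev with ⟨t, ht⟩
        exact ⟨t - 1, by omega⟩
      have hi' : (i : ℂ) ≠ 0 := Nat.cast_ne_zero.mpr hi0
      have hconst : ∀ k ∈ Finset.range (m+1),
          (-(2⁻¹ : ℂ)) ^ i * T k i
          = (bernoulliPolyC i (2⁻¹) * (-(2⁻¹ : ℂ)) ^ (m+1) * w ^ (2*m+1-i) / (i:ℂ))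
            * ((m.choose k : ℂ) * ((m + k).choose (i-1) : ℂ) * (-(2⁻¹ : ℂ)) ^ k) := by
        intro k hk
        simp only [Finset.mem_range] at hk
        have hmk : ((m:ℂ)+k+1) ≠ 0 := by
          have h0 : ((m+k+1 : ℕ) : ℂ) ≠ 0 := Nat.cast_ne_zero.mpr (by omega)
          push_cast at h0
          exact h0
        simp only [hT]
        by_cases hle : i ≤ m+k+1
        · have hpow1 : (-(w/2) : ℂ) ^ (m+k+1-i) = (-(2⁻¹:ℂ)) ^ (m+k+1-i) * w ^ (m+k+1-i) := by
            rw [show (-(w/2) : ℂ) = (-(2⁻¹:ℂ)) * w by ring, mul_pow]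
          have hpow2 : (-(2⁻¹:ℂ)) ^ i * (-(2⁻¹:ℂ)) ^ (m+k+1-i)
              = (-(2⁻¹:ℂ)) ^ (m+1) * (-(2⁻¹:ℂ)) ^ k := by
            rw [← pow_add, ← pow_add]; congr 1; omega
          have hpow3 : w ^ (m+k+1-i) * w ^ (m-k) = w ^ (2*m+1-i) := by
            rw [← pow_add]; congr 1; omega
          have hchoose : ((m+k+1).choose i : ℂ) * (i : ℂ)
              = ((m:ℂ)+k+1) * ((m+k).choose (i-1) : ℂ) := by
            have hn := Nat.add_one_mul_choose_eq (m+k) (i-1)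
            rw [show i - 1 + 1 = i by omega] at hn
            have hcast := congrArg (Nat.cast : ℕ → ℂ) hn
            push_cast at hcast
            rw [show ((m:ℂ)+k+1) = ((m:ℂ)+(k:ℂ))+1 by ring, ← hcast]
          have hdiv : ((m+k+1).choose i : ℂ) / ((m:ℂ)+k+1)
              = ((m+k).choose (i-1) : ℂ) / (i:ℂ) := by
            rw [div_eq_div_iff hmk hi']
            linear_combination hchoose
          rw [hpow1]
          calc (-(2⁻¹:ℂ)) ^ i * ((m.choose k : ℂ) * (((m+k+1).choose i : ℂ) * bernoulliPolyC i (2⁻¹)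
                * ((-(2⁻¹:ℂ)) ^ (m+k+1-i) * w ^ (m+k+1-i))) / ((m:ℂ) + k + 1) * w ^ (m - k))
              = (((m+k+1).choose i : ℂ) / ((m:ℂ)+k+1)) * ((m.choose k : ℂ) * bernoulliPolyC i (2⁻¹)
                * ((-(2⁻¹:ℂ)) ^ i * (-(2⁻¹:ℂ)) ^ (m+k+1-i)) * (w ^ (m+k+1-i) * w ^ (m-k))) := by
                ring
            _ = (((m+k).choose (i-1) : ℂ) / (i:ℂ)) * ((m.choose k : ℂ) * bernoulliPolyC i (2⁻¹)
                * ((-(2⁻¹:ℂ)) ^ (m+1) * (-(2⁻¹:ℂ)) ^ k) * w ^ (2*m+1-i)) := by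
                rw [hdiv, hpow2, hpow3]
            _ = _ := by ring
        · rw [Nat.choose_eq_zero_of_lt (show m+k+1 < i by omega),
            Nat.choose_eq_zero_of_lt (show m+k < i-1 by omega)]
          push_cast
          ring
      have hsum : (-(2⁻¹ : ℂ)) ^ i * (∑ k ∈ Finset.range (m+1), T k i)
          = (bernoulliPolyC i (2⁻¹) * (-(2⁻¹ : ℂ)) ^ (m+1) * w ^ (2*m+1-i) / (i:ℂ))
            * ∑ k ∈ Finset.range (m+1),
              ((m.choose k : ℂ) * ((m + k).choose (i-1) : ℂ) * (-(2⁻¹ : ℂ)) ^ k) := by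
        rw [Finset.mul_sum, Finset.mul_sum]
        exact Finset.sum_congr rfl hconst
      rw [sum_choose_add_choose_odd m (i-1) hi1, mul_zero] at hsum
      have hp : (-(2⁻¹ : ℂ)) ^ i ≠ 0 := pow_ne_zero _ (by norm_num)
      rcases mul_eq_zero.mp hsum with h | h
      · exact absurd h hp
      · exact h
    · refine Finset.sum_eq_zero fun k _ => ?_
      simp only [hT, hBhodd i hodd]
      simp
  rw [Finset.sum_eq_single_of_mem 0 (by simp) hzero]
  have hterm : ∀ k ∈ Finset.range (m+1), T k 0
      = ((-(2⁻¹:ℂ)) ^ (m+1) * w ^ (2*m+1)) * ((m.choose k : ℂ) * (-(2⁻¹ : ℂ)) ^ k / ((m:ℂ)+k+1)) := by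
    intro k hk
    simp only [Finset.mem_range] at hk
    simp only [hT, Nat.choose_zero_right, Nat.cast_one, hBh0, Nat.sub_zero, one_mul, mul_one]
    have hpow1 : (-(w/2) : ℂ) ^ (m+k+1) = (-(2⁻¹:ℂ)) ^ (m+k+1) * w ^ (m+k+1) := by
      rw [show (-(w/2) : ℂ) = (-(2⁻¹:ℂ)) * w by ring, mul_pow]
    have hpow2 : (-(2⁻¹:ℂ)) ^ (m+k+1) = (-(2⁻¹:ℂ)) ^ (m+1) * (-(2⁻¹:ℂ)) ^ k := by
      rw [← pow_add]; congr 1; omega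
    have hpow3 : w ^ (m+k+1) * w ^ (m-k) = w ^ (2*m+1) := by
      rw [← pow_add]; congr 1; omega
    rw [hpow1, hpow2, ← hpow3]
    ring
  rw [Finset.sum_congr rfl hterm, ← Finset.mul_sum, U0_complex m]
  -- final arithmetic
  have hfac : ((2*m).choose m : ℂ) * m.factorial * m.factorial = ((2*m).factorial : ℂ) := by
    have h := Nat.choose_mul_factorial_mul_factorial (show m ≤ 2*m by omega)
    rw [show 2*m - m = m by omega] at h
    exact_mod_cast congrArg (Nat.cast : ℕ → ℂ) h
  have hfac2 : ((2*m+1).factorial : ℂ) = (2*(m:ℂ)+1) * ((2*m).factorial : ℂ) := by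
    rw [Nat.factorial_succ]
    push_cast
    ring
  have hne1 : ((2*m).factorial : ℂ) ≠ 0 := Nat.cast_ne_zero.mpr (Nat.factorial_ne_zero _)
  have hne2 : (2*(m:ℂ)+1) ≠ 0 := by
    have h0 : ((2*m+1 : ℕ) : ℂ) ≠ 0 := Nat.cast_ne_zero.mpr (by omega)
    push_cast at h0
    exact h0
  have hne3 : ((2*m).choose m : ℂ) ≠ 0 :=
    Nat.cast_ne_zero.mpr (Nat.choose_pos (show m ≤ 2*m by omega)).ne'
  have E : (2:ℂ) ^ m * (m.factorial : ℂ) * m.factorial / ((2 * m + 1).factorial : ℂ)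
      = 2 ^ m / ((2*(m:ℂ)+1) * ((2*m).choose m : ℂ)) := by
    rw [hfac2, ← hfac]
    have hmf : ((m.factorial : ℂ)) ≠ 0 := Nat.cast_ne_zero.mpr (Nat.factorial_ne_zero _)
    have hd1 : (2*(m:ℂ)+1) * (((2*m).choose m : ℂ) * m.factorial * m.factorial) ≠ 0 :=
      mul_ne_zero hne2 (mul_ne_zero (mul_ne_zero hne3 hmf) hmf)
    have hd2 : (2*(m:ℂ)+1) * ((2*m).choose m : ℂ) ≠ 0 := mul_ne_zero hne2 hne3
    rw [div_eq_div_iff hd1 hd2]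
    ring
  rw [E]
  have hnegpow : (-(2⁻¹:ℂ)) ^ (m+1) = (-1:ℂ)^(m+1) * ((2:ℂ)^(m+1))⁻¹ := by
    rw [show (-(2⁻¹:ℂ)) = (-1:ℂ) * (2:ℂ)⁻¹ by norm_num, mul_pow, inv_pow]
  have h2m : (2:ℂ)^(m+1) = 2 * 2 ^ m := by rw [pow_succ]; ring
  have hp2 : ((2:ℂ)^m) ≠ 0 := pow_ne_zero _ (by norm_num)
  rw [hnegpow, h2m]
  calc ((-1:ℂ)^(m+1) * (2 * 2^m)⁻¹) * w ^ (2*m+1) * (2^m / ((2*(m:ℂ)+1) * ((2*m).choose m : ℂ)))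
      = ((-1:ℂ)^(m+1) * 2⁻¹ * w ^ (2*m+1)) * ((((2:ℂ)^m)⁻¹ * 2^m) / ((2*(m:ℂ)+1) * ((2*m).choose m : ℂ))) := by
        rw [mul_inv]
        ring
    _ = (-1) ^ (m + 1) / 2 * (w ^ (2 * m + 1) / ((2 * (m:ℂ) + 1) * ((2 * m).choose m : ℂ))) := by
        rw [inv_mul_cancel₀ hp2]
        ring
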